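/- If player TWO has a winning strategy in the length-ω game G_fin^ω(𝒪,𝒪) on a separable metric space X, then X is σ-compact. -/

import Mathlib

open Set Filter Topology TopologicalSpace

/-- `𝒰` is an open cover of the space `Z`. -/
def IsOpenCover {Z : Type*} [TopologicalSpace Z] (𝒰 : Set (Set Z)) : Prop :=
  (∀ U ∈ 𝒰, IsOpen U) ∧ ⋃₀ 𝒰 = univ

/-- `𝒰` is an ω-cover: an open cover, not containing the whole space,
such that every finite subset of the space is contained in a member. -/
def IsOmegaCover {Z : Type*} [TopologicalSpace Z] (𝒰 : Set (Set Z)) : Prop :=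
  IsOpenCover 𝒰 ∧ univ ∉ 𝒰 ∧ ∀ F : Set Z, F.Finite → ∃ U ∈ 𝒰, F ⊆ U

/-- The Menger property `S_fin(𝒪,𝒪)`. -/
def Menger (Z : Type*) [TopologicalSpace Z] : Prop :=
  ∀ 𝒰 : ℕ → Set (Set Z), (∀ n, IsOpenCover (𝒰 n)) →
    ∃ 𝒱 : ℕ → Set (Set Z), (∀ n, (𝒱 n).Finite ∧ 𝒱 n ⊆ 𝒰 n) ∧ ⋃₀ (⋃ n, 𝒱 n) = univ

/-- The Rothberger property `S_1(𝒪,𝒪)`. -/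
def Rothberger (Z : Type*) [TopologicalSpace Z] : Prop :=
  ∀ 𝒰 : ℕ → Set (Set Z), (∀ n, IsOpenCover (𝒰 n)) →
    ∃ U : ℕ → Set Z, (∀ n, U n ∈ 𝒰 n) ∧ (⋃ n, U n) = univ

/-- Selective screenability `S_c(𝒪,𝒪)`. -/
def SelScreenable (Z : Type*) [TopologicalSpace Z] : Prop :=
  ∀ 𝒰 : ℕ → Set (Set Z), (∀ n, IsOpenCover (𝒰 n)) →
    ∃ 𝒱 : ℕ → Set (Set Z),
      (∀ n, (𝒱 n).PairwiseDisjoint id ∧ (∀ V ∈ 𝒱 n, IsOpen V) ∧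
        (∀ V ∈ 𝒱 n, ∃ U ∈ 𝒰 n, V ⊆ U)) ∧
      ⋃₀ (⋃ n, 𝒱 n) = univ

/-- The Hurewicz property. -/
def Hurewicz (Z : Type*) [TopologicalSpace Z] : Prop :=
  ∀ 𝒰 : ℕ → Set (Set Z), (∀ n, IsOpenCover (𝒰 n)) →
    ∃ 𝒱 : ℕ → Set (Set Z), (∀ n, (𝒱 n).Finite ∧ 𝒱 n ⊆ 𝒰 n) ∧
      ∀ z : Z, ∀ᶠ n in atTop, z ∈ ⋃₀ 𝒱 n

/-- `𝒰` is a γ-cover: an infinite family of open sets such that every point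
lies in all but finitely many members. -/
def IsGammaCover {Z : Type*} [TopologicalSpace Z] (𝒰 : Set (Set Z)) : Prop :=
  𝒰.Infinite ∧ (∀ U ∈ 𝒰, IsOpen U) ∧ ∀ z : Z, {U ∈ 𝒰 | z ∉ U}.Finite

/-- `S_1(Ω,Γ)`: from every sequence of ω-covers one can pick one member each
so that the selections form a γ-cover (the γ-set property). -/
def S1OmegaGamma (Z : Type*) [TopologicalSpace Z] : Prop :=
  ∀ 𝒰 : ℕ → Set (Set Z), (∀ n, IsOmegaCover (𝒰 n)) →
    ∃ U : ℕ → Set Z, (∀ n, U n ∈ 𝒰 n) ∧ IsGammaCover (range U)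

/-- `S_1(Ω,𝒪^gp)`: from every sequence of ω-covers one can pick one member each
so that the selections form a groupable cover. -/
def S1OmegaGp (Z : Type*) [TopologicalSpace Z] : Prop :=
  ∀ 𝒰 : ℕ → Set (Set Z), (∀ n, IsOmegaCover (𝒰 n)) →
    ∃ V : ℕ → Set Z, (∀ n, V n ∈ 𝒰 n) ∧
      ∃ f : ℕ → ℕ, StrictMono f ∧
        ∀ z : Z, ∀ᶠ k in atTop, ∃ j ∈ Set.Ico (f k) (f (k + 1)), z ∈ V j

/-- TWO has a winning strategy in the length-`α` game `G_1^α(𝒪,𝒪)` on `Z`: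
a history-dependent selection rule whose picks are legal and cover `Z`
whenever ONE plays open covers. -/
def TwoWinsG1 (Z : Type*) [TopologicalSpace Z] (α : Ordinal.{0}) : Prop :=
  ∃ σ : (Ordinal.{0} → Set (Set Z)) → Ordinal.{0} → Set Z,
    (∀ O O' : Ordinal.{0} → Set (Set Z), ∀ γ, (∀ β ≤ γ, O β = O' β) → σ O γ = σ O' γ) ∧
    ∀ O : Ordinal.{0} → Set (Set Z), (∀ γ, γ < α → IsOpenCover (O γ)) →
      (∀ γ, γ < α → σ O γ ∈ O γ) ∧ ∀ z : Z, ∃ γ, γ < α ∧ z ∈ σ O γ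

/-- TWO has a winning strategy in the length-`α` game `G_fin^α(𝒪,𝒪)` on `Z`. -/
def TwoWinsGfin (Z : Type*) [TopologicalSpace Z] (α : Ordinal.{0}) : Prop :=
  ∃ σ : (Ordinal.{0} → Set (Set Z)) → Ordinal.{0} → Set (Set Z),
    (∀ O O' : Ordinal.{0} → Set (Set Z), ∀ γ, (∀ β ≤ γ, O β = O' β) → σ O γ = σ O' γ) ∧
    ∀ O : Ordinal.{0} → Set (Set Z), (∀ γ, γ < α → IsOpenCover (O γ)) →
      (∀ γ, γ < α → (σ O γ).Finite ∧ σ O γ ⊆ O γ) ∧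
      ∀ z : Z, ∃ γ, γ < α ∧ z ∈ ⋃₀ σ O γ

/-- A Lusin set: an uncountable set of reals meeting every nowhere dense set
in a countable set. -/
def IsLusin (L : Set ℝ) : Prop :=
  ¬ L.Countable ∧ ∀ N : Set ℝ, IsNowhereDense N → (L ∩ N).Countable

/-- A Sierpiński set: an uncountable set of reals meeting every Lebesgue null
set in a countable set. -/
def IsSierpinski (S : Set ℝ) : Prop :=
  ¬ S.Countable ∧ ∀ N : Set ℝ, MeasureTheory.volume N = 0 → (S ∩ N).Countable

namespace TelAux

variable {X : Type*} [MetricSpace X]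

lemma getD_concat_length (l : List ℕ) (a : ℕ) {m : ℕ} (h : m = l.length) :
    (l ++ [a]).getD m 0 = a := by
  subst h; simp [List.getD]

lemma getD_append_lt (l : List ℕ) (a : ℕ) {m : ℕ} (h : m < l.length) :
    (l ++ [a]).getD m 0 = l.getD m 0 := by
  simp [List.getD, List.getElem?_append_left h]

lemma isOpenCover_singleton_univ : IsOpenCover ({univ} : Set (Set X)) :=
  ⟨fun U hU => by simp at hU; subst hU; exact isOpen_univ, by simp⟩

open scoped Classical in
/-- Lift a play indexed by ℕ to one indexed by ordinals. -/
noncomputable def liftPlay (p : ℕ → Set (Set X)) : Ordinal.{0} → Set (Set X) :=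
  fun γ => if h : ∃ n : ℕ, γ = (n : Ordinal) then p h.choose else {univ}

lemma liftPlay_nat (p : ℕ → Set (Set X)) (n : ℕ) :
    liftPlay p (n : Ordinal) = p n := by
  have h : ∃ m : ℕ, (n : Ordinal.{0}) = (m : Ordinal.{0}) := ⟨n, rfl⟩
  simp only [liftPlay, dif_pos h]
  congr 1
  exact (Nat.cast_inj.mp h.choose_spec).symm

variable (σ : (Ordinal.{0} → Set (Set X)) → Ordinal.{0} → Set (Set X))

/-- TWO's response at inning `n` when ONE played `p 0, …, p (n-1)` and then `𝒰`. -/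
noncomputable def resp (p : ℕ → Set (Set X)) (n : ℕ) (𝒰 : Set (Set X)) : Set (Set X) :=
  σ (liftPlay (fun m => if m < n then p m else 𝒰)) (n : Ordinal)

lemma resp_congr (p p' : ℕ → Set (Set X)) (n : ℕ) (hpp : ∀ m < n, p m = p' m)
    (𝒰 : Set (Set X)) : resp σ p n 𝒰 = resp σ p' n 𝒰 := by
  have : (fun m => if m < n then p m else 𝒰) = (fun m => if m < n then p' m else 𝒰) := by
    funext m
    by_cases h : m < n
    · simp [h, hpp m h]
    · simp [h]
  unfold resp
  rw [this]

def WinHyp : Prop :=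
  (∀ O O' : (Ordinal.{0} → Set (Set X)), ∀ γ, (∀ β ≤ γ, O β = O' β) → σ O γ = σ O' γ) ∧
    ∀ O : Ordinal.{0} → Set (Set X), (∀ γ, γ < Ordinal.omega0 → IsOpenCover (O γ)) →
      (∀ γ, γ < Ordinal.omega0 → (σ O γ).Finite ∧ σ O γ ⊆ O γ) ∧
      ∀ z : X, ∃ γ, γ < Ordinal.omega0 ∧ z ∈ ⋃₀ σ O γ

lemma liftPlay_covers {p : ℕ → Set (Set X)} (hp : ∀ n, IsOpenCover (p n)) :
    ∀ γ, γ < Ordinal.omega0 → IsOpenCover (liftPlay p γ) := by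
  intro γ hγ
  obtain ⟨n, rfl⟩ := Ordinal.lt_omega0.mp hγ
  rw [liftPlay_nat]
  exact hp n

lemma resp_legal (hw : WinHyp σ) {p : ℕ → Set (Set X)} {n : ℕ}
    (hp : ∀ m < n, IsOpenCover (p m)) {𝒰 : Set (Set X)} (h𝒰 : IsOpenCover 𝒰) :
    (resp σ p n 𝒰).Finite ∧ resp σ p n 𝒰 ⊆ 𝒰 := by
  set q : ℕ → Set (Set X) := fun m => if m < n then p m else 𝒰 with hq
  have hqcov : ∀ m, IsOpenCover (q m) := by
    intro m
    by_cases h : m < n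
    · simpa [hq, h] using hp m h
    · simpa [hq, h] using h𝒰
  have := (hw.2 (liftPlay q) (liftPlay_covers hqcov)).1 (n : Ordinal) (Ordinal.nat_lt_omega0 n)
  rw [liftPlay_nat] at this
  have hqn : q n = 𝒰 := by simp [hq]
  rw [hqn] at this
  exact this

/-- The compact kernel at a position. -/
noncomputable def Kset (p : ℕ → Set (Set X)) (n : ℕ) : Set X :=
  ⋂ 𝒰 ∈ {𝒰 : Set (Set X) | IsOpenCover 𝒰}, closure (⋃₀ resp σ p n 𝒰)

lemma Kset_congr (p p' : ℕ → Set (Set X)) (n : ℕ) (hpp : ∀ m < n, p m = p' m) :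
    Kset σ p n = Kset σ p' n := by
  unfold Kset
  exact iInter₂_congr fun 𝒰 _ => by rw [resp_congr σ p p' n hpp]

lemma isClosed_Kset (p : ℕ → Set (Set X)) (n : ℕ) : IsClosed (Kset σ p n) :=
  isClosed_biInter fun _ _ => isClosed_closure

lemma Kset_subset (p : ℕ → Set (Set X)) (n : ℕ) {𝒰 : Set (Set X)} (h𝒰 : IsOpenCover 𝒰) :
    Kset σ p n ⊆ closure (⋃₀ resp σ p n 𝒰) :=
  biInter_subset_of_mem h𝒰

/-- the key finite-subcover property of the kernel. -/
lemma Kset_finite_subcover (hw : WinHyp σ) {p : ℕ → Set (Set X)} {n : ℕ}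
    (hp : ∀ m < n, IsOpenCover (p m)) {𝒰 : Set (Set X)} (h𝒰 : IsOpenCover 𝒰) :
    ∃ F : Set (Set X), F ⊆ 𝒰 ∧ F.Finite ∧ Kset σ p n ⊆ ⋃₀ F := by
  classical
  set 𝒰' : Set (Set X) := {V | IsOpen V ∧ ∃ U ∈ 𝒰, closure V ⊆ U} with h𝒰'
  have h𝒰'cov : IsOpenCover 𝒰' := by
    constructor
    · intro V hV; exact hV.1
    · apply eq_univ_of_forall
      intro x
      have hx : x ∈ ⋃₀ 𝒰 := h𝒰.2.symm ▸ mem_univ x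
      obtain ⟨U, hU𝒰, hxU⟩ := hx
      obtain ⟨ε, hε, hball⟩ := Metric.isOpen_iff.mp (h𝒰.1 U hU𝒰) x hxU
      refine ⟨Metric.ball x (ε/2), ⟨Metric.isOpen_ball, U, hU𝒰, ?_⟩, Metric.mem_ball_self (by positivity)⟩
      calc closure (Metric.ball x (ε/2)) ⊆ Metric.closedBall x (ε/2) :=
            Metric.closure_ball_subset_closedBall
        _ ⊆ Metric.ball x ε := Metric.closedBall_subset_ball (by linarith)
        _ ⊆ U := hball
  obtain ⟨hTfin, hT𝒰'⟩ := resp_legal σ hw hp h𝒰'cov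
  set T := resp σ p n 𝒰' with hT
  -- choose a member of 𝒰 containing each closure
  have hch : ∀ V ∈ T, ∃ U ∈ 𝒰, closure V ⊆ U := fun V hV => (hT𝒰' hV).2
  choose! c hc𝒰 hcsub using hch
  refine ⟨c '' T, ?_, hTfin.image c, ?_⟩
  · rintro _ ⟨V, hV, rfl⟩; exact hc𝒰 V hV
  · intro x hx
    have hx1 : x ∈ closure (⋃₀ T) := Kset_subset σ p n h𝒰'cov hx
    have : closure (⋃₀ T) = ⋃ V ∈ T, closure V := by
      rw [sUnion_eq_biUnion]
      exact hTfin.closure_biUnion _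
    rw [this] at hx1
    obtain ⟨V, hV, hxV⟩ := mem_iUnion₂.mp hx1
    exact ⟨c V, ⟨V, hV, rfl⟩, hcsub V hV hxV⟩

lemma isCompact_Kset (hw : WinHyp σ) {p : ℕ → Set (Set X)} {n : ℕ}
    (hp : ∀ m < n, IsOpenCover (p m)) : IsCompact (Kset σ p n) := by
  classical
  apply isCompact_of_finite_subcover
  intro ι U hUopen hcov
  rcases isEmpty_or_nonempty ι with hι | hι
  · refine ⟨∅, ?_⟩
    have : ⋃ i, U i = ∅ := by simp
    rw [this] at hcov
    intro x hx
    exact absurd (hcov hx) (by simp)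
  · set K := Kset σ p n with hK
    set 𝒱 : Set (Set X) := insert Kᶜ (range U) with h𝒱
    have h𝒱cov : IsOpenCover 𝒱 := by
      constructor
      · intro V hV
        rcases mem_insert_iff.mp hV with rfl | ⟨i, rfl⟩
        · exact (isClosed_Kset σ p n).isOpen_compl
        · exact hUopen i
      · apply eq_univ_of_forall
        intro x
        by_cases hx : x ∈ K
        · obtain ⟨i, hxi⟩ := mem_iUnion.mp (hcov hx)
          exact ⟨U i, Or.inr ⟨i, rfl⟩, hxi⟩
        · exact ⟨Kᶜ, Or.inl rfl, hx⟩
    obtain ⟨F, hF𝒱, hFfin, hFcov⟩ := Kset_finite_subcover σ hw hp h𝒱cov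
    have hch : ∀ W ∈ F ∩ range U, ∃ i, U i = W := fun W hW => hW.2
    choose! c hc using hch
    have hFi : (F ∩ range U).Finite := hFfin.subset inter_subset_left
    refine ⟨hFi.toFinset.image c, ?_⟩
    intro x hx
    obtain ⟨W, hWF, hxW⟩ := hFcov hx
    have hWr : W ∈ range U := by
      rcases mem_insert_iff.mp (hF𝒱 hWF) with rfl | hr
      · exact absurd hx hxW
      · exact hr
    have hWm : W ∈ F ∩ range U := ⟨hWF, hWr⟩
    refine mem_iUnion₂.mpr ⟨c W, ?_, ?_⟩
    · exact Finset.mem_image.mpr ⟨W, by simpa using hWm, rfl⟩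
    · rw [hc W hWm]; exact hxW


section SecondCountable
variable [SeparableSpace X]

lemma exists_g (p : ℕ → Set (Set X)) (n : ℕ) :
    ∃ g : ℕ → Set (Set X), (∀ m, IsOpenCover (g m)) ∧
      ∀ x : X, x ∉ Kset σ p n → ∃ m, x ∉ closure (⋃₀ resp σ p n (g m)) := by
  classical
  haveI : SecondCountableTopology X := UniformSpace.secondCountable_of_separable X
  set ι := {𝒰 : Set (Set X) // IsOpenCover 𝒰} with hι
  have hι0 : Nonempty ι := ⟨⟨{univ}, isOpenCover_singleton_univ⟩⟩
  set s : ι → Set X := fun i => (closure (⋃₀ resp σ p n i.1))ᶜ with hs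
  have hsopen : ∀ i, IsOpen (s i) := fun i => isClosed_closure.isOpen_compl
  obtain ⟨T, hTc, hTeq⟩ := TopologicalSpace.isOpen_iUnion_countable s hsopen
  obtain ⟨i₀⟩ := hι0
  have hT'c : (insert i₀ T).Countable := hTc.insert i₀
  obtain ⟨f, hf⟩ := hT'c.exists_eq_range ⟨i₀, mem_insert i₀ T⟩
  refine ⟨fun m => (f m).1, fun m => (f m).2, ?_⟩
  intro x hx
  have hx2 : x ∈ ⋃ i, s i := by
    simp only [Kset, mem_iInter, not_forall] at hx
    obtain ⟨𝒰, h𝒰, hxn⟩ := hx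
    exact mem_iUnion.mpr ⟨⟨𝒰, h𝒰⟩, hxn⟩
  rw [← hTeq] at hx2
  obtain ⟨i, hiT, hxi⟩ := mem_iUnion₂.mp hx2
  have hi' : i ∈ insert i₀ T := mem_insert_of_mem _ hiT
  rw [hf] at hi'
  obtain ⟨m, rfl⟩ := hi'
  exact ⟨m, hxi⟩

/-- The chosen countable sequence of covers witnessing the kernel at each position. -/
noncomputable def Gfun (p : ℕ → Set (Set X)) (n : ℕ) : ℕ → Set (Set X) :=
  (exists_g σ p n).choose

lemma Gfun_cover (p : ℕ → Set (Set X)) (n m : ℕ) : IsOpenCover (Gfun σ p n m) :=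
  (exists_g σ p n).choose_spec.1 m

lemma Gfun_spec (p : ℕ → Set (Set X)) (n : ℕ) {x : X} (hx : x ∉ Kset σ p n) :
    ∃ m, x ∉ closure (⋃₀ resp σ p n (Gfun σ p n m)) :=
  (exists_g σ p n).choose_spec.2 x hx

/-- Finite approximations to plays along the tree of chosen covers. -/
noncomputable def pre (f : ℕ → ℕ) : ℕ → ℕ → Set (Set X)
  | 0 => fun _ => {univ}
  | n+1 => fun m => if m = n then Gfun σ (pre f n) n (f n) else pre f n m

lemma pre_congr (f f' : ℕ → ℕ) (n : ℕ) (hff : ∀ m < n, f m = f' m) :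
    pre σ f n = pre σ f' n := by
  induction n with
  | zero => rfl
  | succ n ih =>
    have h1 : pre σ f n = pre σ f' n := ih fun m hm => hff m (Nat.lt_succ_of_lt hm)
    funext m
    simp only [pre, h1, hff n (Nat.lt_succ_self n)]

lemma pre_lt (f : ℕ → ℕ) {m n : ℕ} (hmn : m < n) :
    pre σ f n m = Gfun σ (pre σ f m) m (f m) := by
  induction n with
  | zero => exact absurd hmn (Nat.not_lt_zero m)
  | succ n ih =>
    rcases Nat.lt_succ_iff_lt_or_eq.mp hmn with h | rfl
    · have : pre σ f (n+1) m = pre σ f n m := by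
        simp only [pre, if_neg (Nat.ne_of_lt h)]
      rw [this]; exact ih h
    · simp [pre]

lemma pre_cover (f : ℕ → ℕ) {m n : ℕ} (hmn : m < n) : IsOpenCover (pre σ f n m) := by
  rw [pre_lt σ f hmn]; exact Gfun_cover σ _ m (f m)

lemma pre_covers (f : ℕ → ℕ) (n : ℕ) : ∀ m < n, IsOpenCover (pre σ f n m) :=
  fun _ hm => pre_cover σ f hm

/-- The coverage lemma: every point is in some kernel along the tree. -/
lemma coverage (hw : WinHyp σ) (x : X) : ∃ (f : ℕ → ℕ) (n : ℕ), x ∈ Kset σ (pre σ f n) n := by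
  classical
  by_contra hx
  push_neg at hx
  -- choice of a defeating next index at each position
  have spec : ∀ f : ℕ → ℕ, ∀ n : ℕ,
      ∃ m, x ∉ closure (⋃₀ resp σ (pre σ f n) n (Gfun σ (pre σ f n) n m)) :=
    fun f n => Gfun_spec σ (pre σ f n) n (hx f n)
  set pick : (ℕ → ℕ) → ℕ → ℕ := fun f n => (spec f n).choose with hpick
  -- build the branch as lists
  set step : List ℕ → List ℕ := fun l => l ++ [pick (l.getD · 0) l.length] with hstep
  set L : ℕ → List ℕ := fun n => step^[n] [] with hL
  have hLsucc : ∀ n, L (n+1) = step (L n) := fun n => Function.iterate_succ_apply' step n []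
  have hLlen : ∀ n, (L n).length = n := by
    intro n
    induction n with
    | zero => rfl
    | succ n ih => rw [hLsucc]; simp [hstep, ih]
  set f : ℕ → ℕ := fun n => (L (n+1)).getD n 0 with hf
  have hfL : ∀ n, f n = pick ((L n).getD · 0) n := by
    intro n
    show (L (n+1)).getD n 0 = _
    rw [hLsucc, hstep]
    simp only
    rw [getD_concat_length _ _ (hLlen n).symm, hLlen]
  have hagree : ∀ n, ∀ m < n, (L n).getD m 0 = f m := by
    intro n
    induction n with
    | zero => intro m hm; exact absurd hm (Nat.not_lt_zero m)
    | succ n ih =>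
      intro m hm
      rw [hLsucc, hstep]
      simp only
      rcases Nat.lt_succ_iff_lt_or_eq.mp hm with h | rfl
      · rw [getD_append_lt _ _ (by rw [hLlen]; exact h)]
        exact ih m h
      · rw [getD_concat_length _ _ (hLlen m).symm, hLlen, ← hfL m]
  have hpref : ∀ n, pre σ ((L n).getD · 0) n = pre σ f n :=
    fun n => pre_congr σ _ f n (hagree n)
  have hspec : ∀ n, x ∉ closure (⋃₀ resp σ (pre σ f n) n (Gfun σ (pre σ f n) n (f n))) := by
    intro n
    have h1 : x ∉ closure (⋃₀ resp σ (pre σ ((L n).getD · 0) n) n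
        (Gfun σ (pre σ ((L n).getD · 0) n) n (pick ((L n).getD · 0) n))) :=
      (spec ((L n).getD · 0) n).choose_spec
    rw [hpref n, ← hfL n] at h1
    exact h1
  -- the limit play
  set P : ℕ → Set (Set X) := fun n => Gfun σ (pre σ f n) n (f n) with hP
  have hPcov : ∀ n, IsOpenCover (P n) := fun n => Gfun_cover σ _ n (f n)
  have hre : ∀ n : ℕ, resp σ (pre σ f n) n (P n) = σ (liftPlay P) (n : Ordinal) := by
    intro n
    unfold resp
    apply hw.1
    intro β hβ
    have hβω : β < Ordinal.omega0 := lt_of_le_of_lt hβ (Ordinal.nat_lt_omega0 n)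
    obtain ⟨m, rfl⟩ := Ordinal.lt_omega0.mp hβω
    have hmn : m ≤ n := Nat.cast_le.mp hβ
    rw [liftPlay_nat, liftPlay_nat]
    rcases lt_or_eq_of_le hmn with h | rfl
    · rw [if_pos h, pre_lt σ f h]
    · rw [if_neg (lt_irrefl m)]
  obtain ⟨γ, hγ, hxγ⟩ := (hw.2 (liftPlay P) (liftPlay_covers hPcov)).2 x
  obtain ⟨n, rfl⟩ := Ordinal.lt_omega0.mp hγ
  rw [← hre n] at hxγ
  exact hspec n (subset_closure hxγ)

lemma coverage_list (hw : WinHyp σ) (x : X) :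
    ∃ l : List ℕ, x ∈ Kset σ (pre σ (l.getD · 0) l.length) l.length := by
  obtain ⟨f, n, hx⟩ := coverage σ hw x
  refine ⟨List.ofFn (fun i : Fin n => f i), ?_⟩
  have hlen : (List.ofFn (fun i : Fin n => f i)).length = n := List.length_ofFn
  rw [hlen]
  have : pre σ ((List.ofFn (fun i : Fin n => f i)).getD · 0) n = pre σ f n := by
    apply pre_congr
    intro m hm
    rw [List.getD_eq_getElem _ _ (by simpa using hm)]
    simp
  rw [this]
  exact hx

end SecondCountable
end TelAux

/-- Telgársky: if TWO has a winning strategy in `G_fin^ω(𝒪,𝒪)` on `X`,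
then `X` is σ-compact. -/
theorem sigmaCompact_of_twoWinsGfin_omega
    {X : Type*} [MetricSpace X] [SeparableSpace X]
    (h : TwoWinsGfin X Ordinal.omega0) :
    ∃ K : ℕ → Set X, (∀ n, IsCompact (K n)) ∧ (⋃ n, K n) = univ := by
  obtain ⟨σ, hdep, hwin⟩ := h
  have hw : TelAux.WinHyp σ := ⟨hdep, hwin⟩
  refine ⟨fun k => TelAux.Kset σ
      (TelAux.pre σ ((Denumerable.ofNat (List ℕ) k).getD · 0)
        (Denumerable.ofNat (List ℕ) k).length)
      (Denumerable.ofNat (List ℕ) k).length, ?_, ?_⟩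
  · intro k
    exact TelAux.isCompact_Kset σ hw (TelAux.pre_covers σ _ _)
  · apply eq_univ_of_forall
    intro x
    obtain ⟨l, hl⟩ := TelAux.coverage_list σ hw x
    refine mem_iUnion.mpr ⟨Encodable.encode l, ?_⟩
    rw [Denumerable.ofNat_encode]
    exact hl
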